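/- With U_m defined by (U_m)_{ij} = C(m-i, j-i) p^{m+1-j} q^{j-i} and P_m defined by (P_m)_{ij} = C(m-i, j-i), one has (U_m P_m)_{ij} = p^{m-j+1} (P_m)_{ij} for all 0 ≤ i, j ≤ m; that is, the columns of P_m are eigenvectors of U_m with eigenvalues p^{m+1}, p^{m}, ..., p. -/

import Mathlib

open Matrix

/-- The columns of the modal matrix `P_m` are eigenvectors of `U_m`:
`(U_m P_m)_{ij} = p^{m-j+1} (P_m)_{ij}`. -/
theorem Um_mul_Pm (p : ℝ) (hp : p ∈ Set.Ioo (0:ℝ) 1) (q : ℝ) (hq : q = 1 - p)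
    (m : ℕ) (hm : 1 ≤ m)
    (U P : Matrix (Fin (m + 1)) (Fin (m + 1)) ℝ)
    (hU : ∀ i j : Fin (m + 1),
      U i j = if (i : ℕ) ≤ (j : ℕ) then ((m - (i : ℕ)).choose ((j : ℕ) - (i : ℕ)) : ℝ)
        * p ^ (m + 1 - (j : ℕ)) * q ^ ((j : ℕ) - (i : ℕ)) else 0)
    (hP : ∀ i j : Fin (m + 1),
      P i j = if (i : ℕ) ≤ (j : ℕ) then ((m - (i : ℕ)).choose ((j : ℕ) - (i : ℕ)) : ℝ) else 0) :
    ∀ i j : Fin (m + 1), (U * P) i j = p ^ (m - (j : ℕ) + 1) * P i j := by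
  intro i j
  set a : ℕ := (i : ℕ) with ha
  set b : ℕ := (j : ℕ) with hb
  have hbm : b ≤ m := Nat.lt_succ_iff.mp j.isLt
  rw [Matrix.mul_apply, hP]
  by_cases hij : a ≤ b
  · -- main case
    set g : ℕ → ℝ := fun k =>
      ((m - a).choose (k - a) : ℝ) * p ^ (m + 1 - k) * q ^ (k - a)
        * ((m - k).choose (b - k) : ℝ) with hg
    have key : ∀ k : Fin (m + 1), U i k * P k j =
        if a ≤ (k : ℕ) ∧ (k : ℕ) ≤ b then g (k : ℕ) else 0 := by
      intro k
      rw [hU, hP, hg]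
      by_cases h1 : a ≤ (k : ℕ) <;> by_cases h2 : (k : ℕ) ≤ b <;>
        simp [h1, h2, ← ha, ← hb] <;> ring
    simp_rw [key]
    have hsum : (∑ k : Fin (m + 1), if a ≤ (k : ℕ) ∧ (k : ℕ) ≤ b then g (k : ℕ) else 0)
        = ∑ k ∈ Finset.Icc a b, g k := by
      rw [Fin.sum_univ_eq_sum_range (fun k => if a ≤ k ∧ k ≤ b then g k else 0) (m + 1),
        Finset.sum_ite, Finset.sum_const_zero, add_zero]
      congr 1
      ext k
      simp only [Finset.mem_filter, Finset.mem_range, Finset.mem_Icc]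
      omega
    rw [hsum, ← Finset.Ico_add_one_right_eq_Icc, Finset.sum_Ico_eq_sum_range]
    have hterm : ∀ t ∈ Finset.range (b + 1 - a), g (a + t)
        = ((m - a).choose (b - a) : ℝ) * p ^ (m + 1 - b)
          * (q ^ t * p ^ (b - a - t) * ((b - a).choose t : ℝ)) := by
      intro t ht
      simp only [Finset.mem_range] at ht
      have htba : t ≤ b - a := by omega
      have hchoose : (m - a).choose (b - a) * (b - a).choose t
          = (m - a).choose t * (m - a - t).choose (b - a - t) :=
        Nat.choose_mul htba
      have h1 : a + t - a = t := by omega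
      have h2 : m - (a + t) = m - a - t := by omega
      have h3 : b - (a + t) = b - a - t := by omega
      have h4 : m + 1 - (a + t) = (m + 1 - b) + (b - a - t) := by omega
      rw [hg]
      simp only [h1, h2, h3, h4, pow_add]
      have : ((m - a).choose t : ℝ) * ((m - a - t).choose (b - a - t) : ℝ)
          = ((m - a).choose (b - a) : ℝ) * ((b - a).choose t : ℝ) := by
        exact_mod_cast congrArg (Nat.cast (R := ℝ)) hchoose.symm
      linear_combination (p ^ (m + 1 - b) * p ^ (b - a - t) * q ^ t) * this
    rw [Finset.sum_congr rfl hterm, ← Finset.mul_sum]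
    have hrange : b + 1 - a = (b - a) + 1 := by omega
    rw [hrange]
    have hbinom : (∑ t ∈ Finset.range ((b - a) + 1),
        q ^ t * p ^ (b - a - t) * ((b - a).choose t : ℝ)) = (q + p) ^ (b - a) :=
      (add_pow q p (b - a)).symm
    rw [hbinom, hq]
    have hmj : m - b + 1 = m + 1 - b := by omega
    simp [hij, hmj, ← ha, ← hb]
    ring
  · -- j < i : both sides zero
    have : ∀ k : Fin (m + 1), U i k * P k j = 0 := by
      intro k
      rw [hU, hP]
      by_cases h1 : a ≤ (k : ℕ)
      · have h2 : ¬ (k : ℕ) ≤ b := by omega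
        simp [h2, ← hb]
      · simp [h1, ← ha]
    simp [this, hij, ← ha, ← hb]
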